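/- Transposed (DIF, multiply-after-butterfly) factorization: for α = (n_K,…,n_0), N = ∏ n_k, F_N = S_α^{-1} (∏_{k=0}^K D̂_{k,α}), where D̂_{k,α} = A_k^{-1} Ŵ_k (I_{N/n_k} ⊗ F_{n_k}) A_k, with A_k = I_{N/N_k} ⊗ L^{N_k}_{n_k}, Ŵ_k = I_{N/N_k} ⊗ W^{N_k}_{n_k}, N_k = ∏_{j=0}^k n_j, and the product over k ordered with D̂_{0,α} leftmost (i.e., the reverse order of the DIT product). -/

import Mathlib

open Matrix Complex

/-- The primitive `n`-th root of unity `ω_n = exp(-2πi/n)`. -/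
noncomputable def tw (n : ℕ) : ℂ := Complex.exp (-(2 * Real.pi * Complex.I) / n)

/-- The `n × n` DFT matrix `F_n = [ω_n^{kl}]`. -/
noncomputable def DFT (n : ℕ) : Matrix (Fin n) (Fin n) ℂ :=
  fun r c => tw n ^ (r.val * c.val)

/-- The stride permutation `L^n_k` (with `n = k*m`), sending the basis vector
`e_{i,k} ⊗ e_{j,m}` (flat index `i*m+j`) to `e_{j,m} ⊗ e_{i,k}` (flat index `j*k+i`). -/
noncomputable def Lmat (n k m : ℕ) : Matrix (Fin n) (Fin n) ℂ :=
  fun r c => if r.val = (c.val % m) * k + c.val / m then 1 else 0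

/-- The diagonal twiddle matrix `W^n_m` (with `n = k*m`), acting on
`e_{i,k} ⊗ e_{j,m}` (flat index `c = i*m+j`) by the scalar `ω_n^{ij}`. -/
noncomputable def Wmat (n m : ℕ) : Matrix (Fin n) (Fin n) ℂ :=
  fun r c => if r = c then tw n ^ ((c.val / m) * (c.val % m)) else 0

/-- Entry of a `k × k` matrix at natural-number indices (0 outside range). -/
noncomputable def ment {k : ℕ} (A : Matrix (Fin k) (Fin k) ℂ) (i j : ℕ) : ℂ :=
  if h : i < k ∧ j < k then A ⟨i, h.1⟩ ⟨j, h.2⟩ else 0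

/-- Kronecker product `A ⊗ B` of a `k×k` and an `m×m` matrix, written on flat
indices of size `n = k*m` (row-major: index `i*m+j ↔ e_{i,k} ⊗ e_{j,m}`). -/
noncomputable def kron (n k m : ℕ) (A : Matrix (Fin k) (Fin k) ℂ)
    (B : Matrix (Fin m) (Fin m) ℂ) : Matrix (Fin n) (Fin n) ℂ :=
  fun r c => ment A (r.val / m) (c.val / m) * ment B (r.val % m) (c.val % m)

/-- Value of a digit list `[d_0, d_1, …]` in the mixed-radix system with radices
`[c_0, c_1, …]` (least-significant first): `d_0 + c_0*(d_1 + c_1*(…))`. -/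
def mval : List ℕ → List ℕ → ℕ
  | c :: cs, d :: ds => d + c * mval cs ds
  | _, _ => 0

/-- Digits (least-significant first) of `x` in the mixed-radix system with
radices `[c_0, c_1, …]` (least-significant first). -/
def mdig : List ℕ → ℕ → List ℕ
  | [], _ => []
  | c :: cs, x => x % c :: mdig cs (x / c)

/-- The digit-reversal permutation `P_α` of a multi-index `α = (n_K, …, n_0)`,
where `a = [n_0, …, n_K]` lists the radices of the system generated by `α`
least-significant first: `x` is decomposed in the system generated by
`α* = (n_0, …, n_K)` and re-read with reversed digits in the system of `α`. -/
def mrev (a : List ℕ) (x : ℕ) : ℕ := mval a ((mdig a.reverse x).reverse)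

/-- The digit-reversal permutation matrix `S_α`, `S_α e_x = e_{P_α x}`;
`a = [n_0, …, n_K]` lists `α = (n_K, …, n_0)` least-significant first. -/
noncomputable def Smat (n : ℕ) (a : List ℕ) : Matrix (Fin n) (Fin n) ℂ :=
  fun r c => if r.val = mrev a c.val then 1 else 0

/-- The diagonal matrix `V_{k,m,n}` of size `N = k*m*n`, acting on
`e_{i,k} ⊗ e_{j,m} ⊗ e_{ℓ,n}` (flat index `i*(m*n) + j*n + ℓ`) by
`ω_{kmn}^{i(ℓ m + j)}`. -/
noncomputable def Vmat (N k m n : ℕ) : Matrix (Fin N) (Fin N) ℂ :=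
  fun r c => if r = c then
    tw (k * m * n) ^ ((c.val / (m * n)) * ((c.val % n) * m + (c.val / n) % m)) else 0



-- nat helpers
lemma mydiv {q : ℕ} (u : ℕ) {v : ℕ} (hv : v < q) : (u * q + v) / q = u := by
  have hq : 0 < q := Nat.pos_of_ne_zero (by omega)
  rw [mul_comm, Nat.mul_add_div hq, Nat.div_eq_of_lt hv, add_zero]

lemma mymod {q : ℕ} (u : ℕ) {v : ℕ} (hv : v < q) : (u * q + v) % q = v := by
  rw [mul_comm, Nat.mul_add_mod, Nat.mod_eq_of_lt hv]

lemma dm_unique {q u v u' v' : ℕ} (hv : v < q) (hv' : v' < q)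
    (h : u * q + v = u' * q + v') : u = u' ∧ v = v' := by
  constructor
  · rw [← mydiv u hv, h, mydiv u' hv']
  · rw [← mymod u hv, h, mymod u' hv']

lemma div_lt_of_lt_mul' {r p q : ℕ} (hq : 0 < q) (hr : r < p * q) : r / q < p :=
  (Nat.div_lt_iff_lt_mul hq).2 hr

lemma combine_lt {p q u v : ℕ} (hu : u < p) (hv : v < q) : u * q + v < p * q := by
  calc u * q + v < u * q + q := by omega
  _ = (u + 1) * q := by ring
  _ ≤ p * q := Nat.mul_le_mul_right q hu

-- tw lemmas
lemma tw_pow (n k : ℕ) : tw n ^ k = Complex.exp ((k : ℂ) * (-(2 * Real.pi * Complex.I) / n)) := by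
  rw [Complex.exp_nat_mul]; rfl

lemma tw_pow_self {n : ℕ} (hn : 0 < n) : tw n ^ n = 1 := by
  rw [tw_pow]
  have hn' : (n : ℂ) ≠ 0 := Nat.cast_ne_zero.2 hn.ne'
  have : (n : ℂ) * (-(2 * Real.pi * Complex.I) / n) = -(2 * Real.pi * Complex.I) := by
    field_simp
  rw [this, Complex.exp_neg, Complex.exp_two_pi_mul_I, inv_one]

lemma tw_pow_factor {N k m : ℕ} (hk : 0 < k) (hm : 0 < m) (h : N = k * m) :
    tw N ^ m = tw k := by
  rw [tw_pow, show tw k = Complex.exp (-(2 * Real.pi * Complex.I) / k) from rfl]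
  congr 1
  have hk' : (k : ℂ) ≠ 0 := Nat.cast_ne_zero.2 hk.ne'
  have hm' : (m : ℂ) ≠ 0 := Nat.cast_ne_zero.2 hm.ne'
  have hN : (N : ℂ) = k * m := by rw [h]; push_cast; ring
  rw [hN]
  field_simp

-- ment lemmas
lemma ment_lt {k : ℕ} (A : Matrix (Fin k) (Fin k) ℂ) {i j : ℕ} (hi : i < k) (hj : j < k) :
    ment A i j = A ⟨i, hi⟩ ⟨j, hj⟩ := dif_pos ⟨hi, hj⟩

lemma ment_one {p i j : ℕ} (hi : i < p) (hj : j < p) :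
    ment (1 : Matrix (Fin p) (Fin p) ℂ) i j = if i = j then 1 else 0 := by
  rw [ment_lt _ hi hj, Matrix.one_apply]
  simp [Fin.ext_iff]


/-- Explicit equivalence `Fin p × Fin q ≃ Fin N` when `N = p * q`. -/
def fpq {N p q : ℕ} (hq : 0 < q) (h : N = p * q) : Fin p × Fin q ≃ Fin N where
  toFun x := ⟨x.1.val * q + x.2.val, h ▸ combine_lt x.1.isLt x.2.isLt⟩
  invFun y := (⟨y.val / q, div_lt_of_lt_mul' hq (h ▸ y.isLt)⟩,
               ⟨y.val % q, Nat.mod_lt _ hq⟩)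
  left_inv x := by
    ext
    · simp [mydiv _ x.2.isLt]
    · simp [mymod _ x.2.isLt]
  right_inv y := by
    ext
    simp [Nat.div_add_mod']

lemma kron_mul {N p q : ℕ} (hq : 0 < q) (h : N = p * q)
    (A A' : Matrix (Fin p) (Fin p) ℂ) (B B' : Matrix (Fin q) (Fin q) ℂ) :
    kron N p q A B * kron N p q A' B' = kron N p q (A * A') (B * B') := by
  ext r c
  rw [Matrix.mul_apply]
  rw [← Equiv.sum_comp (fpq hq h) (fun y => kron N p q A B r y * kron N p q A' B' y c)]
  rw [Fintype.sum_prod_type]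
  have hrq : r.val / q < p := div_lt_of_lt_mul' hq (h ▸ r.isLt)
  have hcq : c.val / q < p := div_lt_of_lt_mul' hq (h ▸ c.isLt)
  have hrm : r.val % q < q := Nat.mod_lt _ hq
  have hcm : c.val % q < q := Nat.mod_lt _ hq
  have key : ∀ (u : Fin p) (v : Fin q),
      kron N p q A B r (fpq hq h (u, v)) * kron N p q A' B' (fpq hq h (u, v)) c
      = (A ⟨r.val / q, hrq⟩ u * A' u ⟨c.val / q, hcq⟩) *
        (B ⟨r.val % q, hrm⟩ v * B' v ⟨c.val % q, hcm⟩) := by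
    intro u v
    show (ment A (r.val / q) ((u.val * q + v.val) / q) * ment B (r.val % q) ((u.val * q + v.val) % q)) *
      (ment A' ((u.val * q + v.val) / q) (c.val / q) * ment B' ((u.val * q + v.val) % q) (c.val % q)) = _
    rw [mydiv _ v.isLt, mymod _ v.isLt, ment_lt A hrq u.isLt, ment_lt B hrm v.isLt,
      ment_lt A' u.isLt hcq, ment_lt B' v.isLt hcm]
    ring
  simp only [key]
  rw [← Finset.sum_mul_sum]
  show _ = ment (A * A') _ _ * ment (B * B') _ _
  rw [ment_lt _ hrq hcq, ment_lt _ hrm hcm, Matrix.mul_apply, Matrix.mul_apply]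

lemma kron_one {N p q : ℕ} (hq : 0 < q) (h : N = p * q) :
    kron N p q (1 : Matrix (Fin p) (Fin p) ℂ) (1 : Matrix (Fin q) (Fin q) ℂ) = 1 := by
  ext r c
  have hrq : r.val / q < p := div_lt_of_lt_mul' hq (h ▸ r.isLt)
  have hcq : c.val / q < p := div_lt_of_lt_mul' hq (h ▸ c.isLt)
  show ment 1 (r.val / q) (c.val / q) * ment 1 (r.val % q) (c.val % q) = _
  rw [ment_one hrq hcq, ment_one (Nat.mod_lt _ hq) (Nat.mod_lt _ hq), Matrix.one_apply]
  have hiff : (r : Fin N) = c ↔ (r.val / q = c.val / q ∧ r.val % q = c.val % q) := by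
    constructor
    · intro h'; rw [h']; exact ⟨rfl, rfl⟩
    · intro ⟨h1, h2⟩
      apply Fin.ext
      rw [← Nat.div_add_mod r.val q, ← Nat.div_add_mod c.val q, h1, h2]
  split_ifs with h1 h2 h3 h3 h2 <;> simp_all

/-- resize the identity block -/
lemma kron_one_resize {N p p' q : ℕ} (h : p = p') (B : Matrix (Fin q) (Fin q) ℂ) :
    kron N p q 1 B = kron N p' q 1 B := by subst h; rfl

lemma kron_nest {N n M p q : ℕ} (hn : 0 < n) (hp : 0 < p) (hq : 0 < q)
    (hM : M = p * q) (hN : N = n * M) (X : Matrix (Fin q) (Fin q) ℂ) :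
    kron N (n * p) q 1 X = kron N n M 1 (kron M p q 1 X) := by
  ext r c
  have hM0 : 0 < M := hM ▸ Nat.mul_pos hp hq
  have hqM : q ∣ M := hM ▸ Dvd.intro_left p rfl
  have hrM : r.val % M < M := Nat.mod_lt _ hM0
  have hcM : c.val % M < M := Nat.mod_lt _ hM0
  have hrn : r.val / M < n := div_lt_of_lt_mul' hM0 (hN ▸ r.isLt)
  have hcn : c.val / M < n := div_lt_of_lt_mul' hM0 (hN ▸ c.isLt)
  have hrq : r.val / q < n * p := div_lt_of_lt_mul' hq (by rw [mul_assoc, ← hM, ← hN]; exact r.isLt)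
  have hcq : c.val / q < n * p := div_lt_of_lt_mul' hq (by rw [mul_assoc, ← hM, ← hN]; exact c.isLt)
  show ment 1 (r.val / q) (c.val / q) * ment X (r.val % q) (c.val % q)
    = ment 1 (r.val / M) (c.val / M) * ment (kron M p q 1 X) (r.val % M) (c.val % M)
  rw [ment_lt (kron M p q 1 X) hrM hcM]
  show _ = ment 1 (r.val / M) (c.val / M) *
      (ment 1 (r.val % M / q) (c.val % M / q) * ment X (r.val % M % q) (c.val % M % q))
  rw [Nat.mod_mod_of_dvd _ hqM, Nat.mod_mod_of_dvd _ hqM]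
  have hrp : r.val % M / q < p := div_lt_of_lt_mul' hq (hM ▸ hrM)
  have hcp : c.val % M / q < p := div_lt_of_lt_mul' hq (hM ▸ hcM)
  have hsplit : ∀ x : ℕ, x / q = x / M * p + x % M / q := by
    intro x
    conv_lhs => rw [← Nat.div_add_mod x M]
    rw [hM, show p * q * (x / (p * q)) = q * (x / (p * q) * p) from by ring, Nat.mul_add_div hq]
  rw [ment_one hrq hcq, ment_one hrn hcn, ment_one hrp hcp, hsplit r.val, hsplit c.val]
  have hiff : (r.val / M * p + r.val % M / q = c.val / M * p + c.val % M / q) ↔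
      (r.val / M = c.val / M ∧ r.val % M / q = c.val % M / q) :=
    ⟨fun h => dm_unique hrp hcp h, fun ⟨h1, h2⟩ => by rw [h1, h2]⟩
  rw [if_congr hiff rfl rfl, ite_and]
  split_ifs <;> ring

lemma combine_lt' {k m u v : ℕ} (hu : u < m) (hv : v < k) : u * k + v < k * m := by
  rw [mul_comm k m]; exact combine_lt hu hv

lemma bnd1 {n k m : ℕ} (h : n = k * m) (hm : 0 < m) (c : Fin n) :
    c.val % m * k + c.val / m < n :=
  lt_of_lt_of_eq (combine_lt' (Nat.mod_lt _ hm)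
    (div_lt_of_lt_mul' hm (by rw [← h]; exact c.isLt))) h.symm

lemma bnd2 {n k m : ℕ} (h : n = k * m) (hk : 0 < k) (r : Fin n) :
    r.val % k * m + r.val / k < n :=
  lt_of_lt_of_eq (combine_lt' (Nat.mod_lt _ hk)
    (div_lt_of_lt_mul' hk (by rw [mul_comm m k, ← h]; exact r.isLt)))
    ((mul_comm m k).trans h.symm)

lemma mul_Lmat {n k m : ℕ} (hk : 0 < k) (hm : 0 < m) (h : n = k * m)
    (X : Matrix (Fin n) (Fin n) ℂ) (r c : Fin n) :
    (X * Lmat n k m) r c = X r ⟨c.val % m * k + c.val / m, bnd1 h hm c⟩ := by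
  rw [Matrix.mul_apply]
  set a : Fin n := ⟨c.val % m * k + c.val / m, bnd1 h hm c⟩ with ha
  have h0 : ∀ y ∈ Finset.univ, y ≠ a → X r y * Lmat n k m y c = 0 := by
    intro y _ hy
    have : ¬ (y.val = c.val % m * k + c.val / m) := fun hc => hy (Fin.ext hc)
    show X r y * (if y.val = c.val % m * k + c.val / m then 1 else 0) = 0
    rw [if_neg this, mul_zero]
  rw [Finset.sum_eq_single a h0 (fun hmem => absurd (Finset.mem_univ _) hmem)]
  show X r a * (if a.val = c.val % m * k + c.val / m then (1:ℂ) else 0) = _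
  rw [if_pos rfl, mul_one]

lemma Lmat_mul {n k m : ℕ} (hk : 0 < k) (hm : 0 < m) (h : n = k * m)
    (X : Matrix (Fin n) (Fin n) ℂ) (r c : Fin n) :
    (Lmat n k m * X) r c = X ⟨r.val % k * m + r.val / k, bnd2 h hk r⟩ c := by
  rw [Matrix.mul_apply]
  have hrk : r.val / k < m := div_lt_of_lt_mul' hk (by rw [mul_comm m k, ← h]; exact r.isLt)
  set a : Fin n := ⟨r.val % k * m + r.val / k, bnd2 h hk r⟩ with ha
  have h0 : ∀ y ∈ Finset.univ, y ≠ a → Lmat n k m r y * X y c = 0 := by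
    intro y _ hy
    have hyk : y.val / m < k := div_lt_of_lt_mul' hm (by rw [← h]; exact y.isLt)
    have hneg : ¬ (r.val = y.val % m * k + y.val / m) := by
      intro hc
      apply hy
      have h1 : r.val / k = y.val % m := by rw [hc, mydiv _ hyk]
      have h2 : r.val % k = y.val / m := by rw [hc, mymod _ hyk]
      apply Fin.ext
      show y.val = r.val % k * m + r.val / k
      rw [h1, h2]
      conv_lhs => rw [← Nat.div_add_mod y.val m]
      ring
    show (if r.val = y.val % m * k + y.val / m then (1:ℂ) else 0) * X y c = 0
    rw [if_neg hneg, zero_mul]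
  rw [Finset.sum_eq_single a h0 (fun hmem => absurd (Finset.mem_univ _) hmem)]
  show (if r.val = a.val % m * k + a.val / m then (1:ℂ) else 0) * X a c = _
  have hmod : a.val % m = r.val / k := by rw [ha]; exact mymod _ hrk
  have hdiv : a.val / m = r.val % k := by rw [ha]; exact mydiv _ hrk
  have hcond : r.val = a.val % m * k + a.val / m := by
    rw [hmod, hdiv]
    conv_lhs => rw [← Nat.div_add_mod r.val k]
    ring
  rw [if_pos hcond, one_mul]

lemma Lmat_mul_Lmat {n k m : ℕ} (hk : 0 < k) (hm : 0 < m) (h : n = k * m) :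
    Lmat n k m * Lmat n m k = 1 := by
  ext r c
  rw [mul_Lmat hm hk (by rw [h, mul_comm]) (Lmat n k m) r c]
  have hcm : c.val / k < m := div_lt_of_lt_mul' hk (by rw [mul_comm m k, ← h]; exact c.isLt)
  show (if r.val = (c.val % k * m + c.val / k) % m * k + (c.val % k * m + c.val / k) / m
    then (1:ℂ) else 0) = _
  rw [mymod _ hcm, mydiv _ hcm, Matrix.one_apply]
  have hc : c.val / k * k + c.val % k = c.val := by
    conv_rhs => rw [← Nat.div_add_mod c.val k]
    ring
  rw [hc]
  simp [Fin.ext_iff]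


lemma Wmat_mul {N m : ℕ} (X : Matrix (Fin N) (Fin N) ℂ) (u c : Fin N) :
    (Wmat N m * X) u c = tw N ^ ((u.val / m) * (u.val % m)) * X u c := by
  rw [Matrix.mul_apply]
  have h0 : ∀ y ∈ Finset.univ, y ≠ u → Wmat N m u y * X y c = 0 := by
    intro y _ hy
    show (if u = y then tw N ^ ((y.val / m) * (y.val % m)) else 0) * X y c = 0
    rw [if_neg (fun hc => hy hc.symm), zero_mul]
  rw [Finset.sum_eq_single u h0 (fun hmem => absurd (Finset.mem_univ _) hmem)]
  show (if u = u then tw N ^ ((u.val / m) * (u.val % m)) else 0) * X u c = _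
  rw [if_pos rfl]

lemma mdig_length (cs : List ℕ) (x : ℕ) : (mdig cs x).length = cs.length := by
  induction cs generalizing x with
  | nil => rfl
  | cons c cs ih => simp [mdig, ih]

lemma mval_append (b : List ℕ) (ds : List ℕ) (hlen : ds.length = b.length) (n e : ℕ) :
    mval (b ++ [n]) (ds ++ [e]) = mval b ds + b.prod * e := by
  induction b generalizing ds with
  | nil =>
    rw [List.length_nil, List.length_eq_zero_iff] at hlen
    subst hlen
    simp [mval]
  | cons c cs ih =>
    match ds with
    | [] => simp at hlen
    | d :: ds' =>
      simp only [List.length_cons, Nat.add_right_cancel_iff] at hlen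
      show mval (c :: (cs ++ [n])) (d :: (ds' ++ [e])) = _
      show d + c * mval (cs ++ [n]) (ds' ++ [e]) = _
      rw [ih ds' hlen]
      show _ = d + c * mval cs ds' + (c :: cs).prod * e
      rw [List.prod_cons]
      ring

lemma mrev_append (b : List ℕ) (n x : ℕ) :
    mrev (b ++ [n]) x = mrev b (x / n) + b.prod * (x % n) := by
  unfold mrev
  have h1 : (b ++ [n]).reverse = n :: b.reverse := by simp
  rw [h1]
  show mval (b ++ [n]) ((x % n :: mdig b.reverse (x / n)).reverse) = _
  rw [List.reverse_cons]
  rw [mval_append b _ (by rw [List.length_reverse, mdig_length, List.length_reverse]) n (x % n)]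

lemma mval_lt : ∀ (cs ds : List ℕ), List.Forall₂ (· < ·) ds cs → mval cs ds < cs.prod := by
  intro cs ds h
  induction h with
  | nil => norm_num [mval]
  | @cons d c ds cs hdc _ ih =>
    show d + c * mval cs ds < (c :: cs).prod
    rw [List.prod_cons]
    calc d + c * mval cs ds < c + c * mval cs ds := by omega
    _ = c * (mval cs ds + 1) := by ring
    _ ≤ c * cs.prod := Nat.mul_le_mul_left c ih
lemma mdig_forall : ∀ (cs : List ℕ), (∀ c ∈ cs, 0 < c) → ∀ x, List.Forall₂ (· < ·) (mdig cs x) cs := by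
  intro cs
  induction cs with
  | nil => intro _ x; exact List.Forall₂.nil
  | cons c cs ih =>
    intro h x
    exact List.Forall₂.cons (Nat.mod_lt _ (h c List.mem_cons_self))
      (ih (fun c' hc' => h c' (List.mem_cons_of_mem c hc')) (x / c))

lemma mrev_lt (a : List ℕ) (ha : ∀ c ∈ a, 0 < c) (x : ℕ) : mrev a x < a.prod := by
  apply mval_lt
  rw [← List.reverse_reverse a]
  apply List.forall₂_reverse_iff.2
  rw [List.reverse_reverse]
  exact mdig_forall a.reverse (fun c hc => ha c (List.mem_reverse.1 hc)) x

lemma Smat_singleton {n : ℕ} : Smat n [n] = 1 := by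
  ext r c
  have : mrev [n] c.val = c.val := by
    show mval [n] ((mdig [n] c.val).reverse) = c.val
    show mval [n] ([c.val % n].reverse) = c.val
    show mval [n] [c.val % n] = c.val
    show c.val % n + n * mval [] [] = c.val
    show c.val % n + n * 0 = c.val
    rw [Nat.mod_eq_of_lt c.isLt, mul_zero, add_zero]
  rw [Smat, Matrix.one_apply]
  simp only [this, Fin.ext_iff]

lemma Smat_append {M n N : ℕ} (b : List ℕ) (hb : ∀ x ∈ b, 0 < x) (hn : 0 < n) (hM : M = b.prod)
    (hN : N = M * n) :
    Smat N (b ++ [n]) = kron N n M 1 (Smat M b) * Lmat N M n := by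
  have hM0 : 0 < M := hM ▸ List.prod_pos hb
  ext r c
  rw [mul_Lmat hM0 hn hN (kron N n M 1 (Smat M b)) r c]
  have hcn : c.val / n < M := div_lt_of_lt_mul' hn (by rw [← hN]; exact c.isLt)
  show (if r.val = mrev (b ++ [n]) c.val then (1:ℂ) else 0)
    = ment 1 (r.val / M) ((c.val % n * M + c.val / n) / M) *
      ment (Smat M b) (r.val % M) ((c.val % n * M + c.val / n) % M)
  rw [mydiv _ hcn, mymod _ hcn, mrev_append]
  have hrn : r.val / M < n := div_lt_of_lt_mul' hM0 (by rw [mul_comm n M, ← hN]; exact r.isLt)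
  have hrM : r.val % M < M := Nat.mod_lt _ hM0
  rw [ment_one hrn (Nat.mod_lt _ hn), ment_lt (Smat M b) hrM hcn]
  show _ = (if r.val / M = c.val % n then (1:ℂ) else 0) *
    (if r.val % M = mrev b (c.val / n) then 1 else 0)
  have hmrev : mrev b (c.val / n) < M := hM ▸ mrev_lt b hb (c.val / n)
  have hiff : (r.val = mrev b (c.val / n) + b.prod * (c.val % n)) ↔
      (r.val / M = c.val % n ∧ r.val % M = mrev b (c.val / n)) := by
    rw [← hM]
    constructor
    · intro h'
      have h'' : r.val = (c.val % n) * M + mrev b (c.val / n) := by rw [h']; ring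
      exact ⟨by rw [h'', mydiv _ hmrev], by rw [h'', mymod _ hmrev]⟩
    · intro ⟨h1, h2⟩
      conv_lhs => rw [← Nat.div_add_mod r.val M]
      rw [h1, h2]
      ring
  rw [if_congr hiff rfl rfl, ite_and]
  split_ifs <;> ring

lemma tw_split {M n N : ℕ} (hM : 0 < M) (hn : 0 < n) (hN : N = M * n) (r1 r2 c1 c2 : ℕ) :
    tw N ^ ((r1 * n + r2) * (M * c2 + c1)) =
      tw M ^ (r1 * c1) * (tw N ^ (c1 * r2) * tw n ^ (r2 * c2)) := by
  have hN0 : 0 < N := hN ▸ Nat.mul_pos hM hn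
  have hexp : (r1 * n + r2) * (M * c2 + c1) = n * (r1 * c1) + c1 * r2 + (M * (r2 * c2) + N * (r1 * c2)) := by
    rw [hN]; ring
  have e1 : tw N ^ (n * (r1 * c1)) = tw M ^ (r1 * c1) := by
    rw [pow_mul, tw_pow_factor hM hn hN]
  have e2 : tw N ^ (M * (r2 * c2)) = tw n ^ (r2 * c2) := by
    rw [pow_mul, tw_pow_factor hn hM (by rw [hN, mul_comm])]
  have e3 : tw N ^ (N * (r1 * c2)) = 1 := by
    rw [pow_mul, tw_pow_self hN0, one_pow]
  rw [hexp, pow_add, pow_add, pow_add, e1, e2, e3]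
  ring

lemma kron_one_left_full {N : ℕ} (X : Matrix (Fin N) (Fin N) ℂ) : kron N 1 N 1 X = X := by
  ext r c
  show ment 1 (r.val / N) (c.val / N) * ment X (r.val % N) (c.val % N) = X r c
  rw [Nat.div_eq_of_lt r.isLt, Nat.div_eq_of_lt c.isLt, ment_one Nat.one_pos Nat.one_pos,
    Nat.mod_eq_of_lt r.isLt, Nat.mod_eq_of_lt c.isLt, ment_lt X r.isLt c.isLt]
  simp

lemma Lmat_self_one {n : ℕ} (hn : 0 < n) : Lmat n n 1 = 1 := by
  ext r c
  show (if r.val = c.val % 1 * n + c.val / 1 then (1:ℂ) else 0) = _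
  rw [Nat.mod_one, Nat.div_one, zero_mul, zero_add, Matrix.one_apply]
  simp [Fin.ext_iff]

lemma Wmat_self_one {n : ℕ} : Wmat n n = 1 := by
  ext r c
  show (if r = c then tw n ^ ((c.val / n) * (c.val % n)) else 0) = _
  rw [Nat.div_eq_of_lt c.isLt, zero_mul, pow_zero, Matrix.one_apply]

lemma Lmat_inv {n k m : ℕ} (hk : 0 < k) (hm : 0 < m) (h : n = k * m) :
    (Lmat n k m)⁻¹ = Lmat n m k :=
  Matrix.inv_eq_right_inv (Lmat_mul_Lmat hk hm h)

lemma kron_L_inv {N p Nk nk mk : ℕ} (hnk : 0 < nk) (hmk : 0 < mk)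
    (hNk : Nk = nk * mk) (hN : N = p * Nk) :
    (kron N p Nk 1 (Lmat Nk nk mk))⁻¹ = kron N p Nk 1 (Lmat Nk mk nk) := by
  have hNk0 : 0 < Nk := hNk ▸ Nat.mul_pos hnk hmk
  apply Matrix.inv_eq_right_inv
  rw [kron_mul hNk0 hN, Lmat_mul_Lmat hnk hmk hNk, one_mul, kron_one hNk0 hN]

lemma kron_list_prod {N n M : ℕ} (hM : 0 < M) (hN : N = n * M)
    (l : List (Matrix (Fin M) (Fin M) ℂ)) :
    (l.map (kron N n M 1)).prod = kron N n M 1 l.prod := by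
  induction l with
  | nil => show (1 : Matrix (Fin N) (Fin N) ℂ) = _; rw [List.prod_nil, kron_one hM hN]
  | cons A l ih =>
    rw [List.map_cons, List.prod_cons, List.prod_cons, ih, kron_mul hM hN, one_mul]

lemma core {M n N : ℕ} (hM : 0 < M) (hn : 0 < n) (hN : N = M * n) :
    Lmat N M n * DFT N =
      kron N n M 1 (DFT M) * (Lmat N M n * (Wmat N n * (kron N M n 1 (DFT n) * Lmat N n M))) := by
  have hN' : N = n * M := by rw [hN, mul_comm]
  ext r c
  have hrM : r.val % M < M := Nat.mod_lt _ hM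
  have hcM : c.val % M < M := Nat.mod_lt _ hM
  have hrn : r.val / M < n := div_lt_of_lt_mul' hM (hN' ▸ r.isLt)
  have hcn : c.val / M < n := div_lt_of_lt_mul' hM (hN' ▸ c.isLt)
  rw [Lmat_mul hM hn hN (DFT N) r c]
  rw [Matrix.mul_apply]
  set y0 : Fin N := ⟨r.val / M * M + c.val % M, lt_of_lt_of_eq (combine_lt hrn hcM) hN'.symm⟩ with hy0
  have hterm : ∀ y : Fin N,
      kron N n M 1 (DFT M) r y * (Lmat N M n * (Wmat N n * (kron N M n 1 (DFT n) * Lmat N n M))) y c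
      = (if r.val / M = y.val / M then 1 else 0) * (tw M ^ (r.val % M * (y.val % M))) *
        ((tw N ^ ((y.val % M) * (y.val / M))) *
         ((if y.val % M = c.val % M then 1 else 0) * tw n ^ ((y.val / M) * (c.val / M)))) := by
    intro y
    have hyM : y.val % M < M := Nat.mod_lt _ hM
    have hyn : y.val / M < n := div_lt_of_lt_mul' hM (hN' ▸ y.isLt)
    rw [Lmat_mul hM hn hN _ y c, Wmat_mul]
    rw [mul_Lmat hn hM hN' _ _ c]
    show (ment 1 (r.val / M) (y.val / M) * ment (DFT M) (r.val % M) (y.val % M)) *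
      (tw N ^ (((y.val % M * n + y.val / M) / n) * ((y.val % M * n + y.val / M) % n)) *
       (ment 1 ((y.val % M * n + y.val / M) / n) ((c.val % M * n + c.val / M) / n) *
        ment (DFT n) ((y.val % M * n + y.val / M) % n) ((c.val % M * n + c.val / M) % n))) = _
    rw [mydiv _ hyn, mymod _ hyn, mydiv _ hcn, mymod _ hcn]
    rw [ment_one hrn hyn, ment_one hyM hcM, ment_lt (DFT M) hrM hyM, ment_lt (DFT n) hyn hcn]
    show _ * tw M ^ (r.val % M * (y.val % M)) * (_ * (_ * tw n ^ (y.val / M * (c.val / M)))) = _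
    ring
  have hzero : ∀ y ∈ Finset.univ, y ≠ y0 →
      kron N n M 1 (DFT M) r y * (Lmat N M n * (Wmat N n * (kron N M n 1 (DFT n) * Lmat N n M))) y c = 0 := by
    intro y _ hy
    rw [hterm y]
    by_cases h1 : r.val / M = y.val / M
    · by_cases h2 : y.val % M = c.val % M
      · exfalso
        apply hy
        apply Fin.ext
        show y.val = r.val / M * M + c.val % M
        rw [h1, ← h2]
        conv_lhs => rw [← Nat.div_add_mod y.val M]
        ring
      · rw [if_neg h2]; ring
    · rw [if_neg h1]; ring
  rw [Finset.sum_eq_single y0 hzero (fun hmem => absurd (Finset.mem_univ _) hmem), hterm y0]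
  have hd : y0.val / M = r.val / M := mydiv _ hcM
  have hm' : y0.val % M = c.val % M := mymod _ hcM
  rw [hd, hm', if_pos rfl, if_pos rfl]
  show tw N ^ ((r.val % M * n + r.val / M) * c.val) = _
  have hc : c.val = M * (c.val / M) + c.val % M := (Nat.div_add_mod c.val M).symm
  rw [show (r.val % M * n + r.val / M) * c.val = (r.val % M * n + r.val / M) * (M * (c.val / M) + c.val % M) from by rw [← hc]]
  rw [tw_split hM hn hN (r.val % M) (r.val / M) (c.val % M) (c.val / M)]
  ring

noncomputable def Dfac (N : ℕ) (a : List ℕ) (k : ℕ) : Matrix (Fin N) (Fin N) ℂ :=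
  (kron N (N / (a.take (k+1)).prod) ((a.take (k+1)).prod) 1
      (Lmat ((a.take (k+1)).prod) (a.getD k 1) ((a.take (k+1)).prod / a.getD k 1)))⁻¹ *
  kron N (N / (a.take (k+1)).prod) ((a.take (k+1)).prod) 1 (Wmat ((a.take (k+1)).prod) (a.getD k 1)) *
  kron N (N / a.getD k 1) (a.getD k 1) 1 (DFT (a.getD k 1)) *
  kron N (N / (a.take (k+1)).prod) ((a.take (k+1)).prod) 1
      (Lmat ((a.take (k+1)).prod) (a.getD k 1) ((a.take (k+1)).prod / a.getD k 1))

lemma Dfac_lift_core {M n N nk Nk tk dp : ℕ} (hn : 0 < n) (hnk : 0 < nk) (htk : 0 < tk)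
    (hdp : 0 < dp) (hNk : Nk = tk * nk) (hMf : M = Nk * dp) (hN : N = M * n) :
    (kron N (N/Nk) Nk 1 (Lmat Nk nk (Nk/nk)))⁻¹ * kron N (N/Nk) Nk 1 (Wmat Nk nk) *
      kron N (N/nk) nk 1 (DFT nk) * kron N (N/Nk) Nk 1 (Lmat Nk nk (Nk/nk))
    = kron N n M 1 ((kron M (M/Nk) Nk 1 (Lmat Nk nk (Nk/nk)))⁻¹ *
        kron M (M/Nk) Nk 1 (Wmat Nk nk) * kron M (M/nk) nk 1 (DFT nk) *
        kron M (M/Nk) Nk 1 (Lmat Nk nk (Nk/nk))) := by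
  have hNk0 : 0 < Nk := hNk ▸ Nat.mul_pos htk hnk
  have hM0 : 0 < M := hMf ▸ Nat.mul_pos hNk0 hdp
  have hNM : N = n * M := by rw [hN]; ring
  have hmk : Nk / nk = tk := by rw [hNk, Nat.mul_div_cancel _ hnk]
  have htk0' : 0 < Nk / nk := hmk ▸ htk
  have hMdNk : M / Nk = dp := by rw [hMf, Nat.mul_div_cancel_left _ hNk0]
  have hMdnk : M / nk = tk * dp := by
    rw [hMf, hNk, show tk * nk * dp = nk * (tk * dp) from by ring, Nat.mul_div_cancel_left _ hnk]
  have hNdNk : N / Nk = n * dp := by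
    rw [hN, hMf, show Nk * dp * n = (n * dp) * Nk from by ring, Nat.mul_div_cancel _ hNk0]
  have hNdnk : N / nk = n * (tk * dp) := by
    rw [hN, hMf, hNk, show tk * nk * dp * n = (n * (tk * dp)) * nk from by ring,
      Nat.mul_div_cancel _ hnk]
  have hNkfac : Nk = nk * (Nk / nk) := by rw [hmk, hNk]; ring
  have lift1 : ∀ X : Matrix (Fin Nk) (Fin Nk) ℂ,
      kron N (N/Nk) Nk 1 X = kron N n M 1 (kron M (M/Nk) Nk 1 X) := by
    intro X
    rw [kron_one_resize hNdNk X, kron_nest hn hdp hNk0 (by rw [hMf]; ring) hNM X,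
      kron_one_resize hMdNk.symm X]
  have lift2 : kron N (N/nk) nk 1 (DFT nk) = kron N n M 1 (kron M (M/nk) nk 1 (DFT nk)) := by
    rw [kron_one_resize hNdnk (DFT nk),
      kron_nest hn (Nat.mul_pos htk hdp) hnk (by rw [hMf, hNk]; ring) hNM (DFT nk),
      kron_one_resize hMdnk.symm (DFT nk)]
  rw [kron_L_inv hnk htk0' hNkfac (by rw [hNdNk, hN, hMf]; ring),
    kron_L_inv hnk htk0' hNkfac (by rw [hMdNk, hMf]; ring)]
  rw [lift1, lift1, lift1, lift2]
  rw [kron_mul hM0 hNM, Matrix.one_mul, kron_mul hM0 hNM, Matrix.one_mul,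
    kron_mul hM0 hNM, Matrix.one_mul]

lemma Dfac_lift {M n N : ℕ} (b : List ℕ) (hb : ∀ x ∈ b, 0 < x) (hn : 0 < n)
    (hM : M = b.prod) (hN : N = M * n) {k : ℕ} (hk : k < b.length) :
    Dfac N (b ++ [n]) k = kron N n M 1 (Dfac M b k) := by
  have hgd : (b ++ [n]).getD k 1 = b.getD k 1 := List.getD_append b [n] 1 k hk
  have htk : (b ++ [n]).take (k+1) = b.take (k+1) :=
    List.take_append_of_le_length (Nat.succ_le_of_lt hk)
  have hnk0 : 0 < b.getD k 1 := by
    rw [List.getD_eq_getElem b 1 hk]; exact hb _ (List.getElem_mem hk)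
  have htksucc : b.take (k+1) = b.take k ++ [b.getD k 1] := by
    rw [List.take_succ, List.getD_eq_getElem b 1 hk, List.getElem?_eq_getElem hk]
    rfl
  have hNk1 : (b.take (k+1)).prod = (b.take k).prod * b.getD k 1 := by
    rw [htksucc, List.prod_append, List.prod_singleton]
  have htk0 : 0 < (b.take k).prod :=
    List.prod_pos (fun x hx => hb x (List.mem_of_mem_take hx))
  have hdp0 : 0 < (b.drop (k+1)).prod :=
    List.prod_pos (fun x hx => hb x (List.mem_of_mem_drop hx))
  have hMf : M = (b.take (k+1)).prod * (b.drop (k+1)).prod := by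
    rw [hM, List.prod_take_mul_prod_drop]
  unfold Dfac
  rw [hgd, htk]
  exact Dfac_lift_core hn hnk0 htk0 hdp0 hNk1 hMf hN

lemma Dfac_last {N n M : ℕ} {b : List ℕ} (hn : 0 < n) (hM0 : 0 < M) (hMb : M = b.prod)
    (hN : N = M * n) :
    Dfac N (b ++ [n]) b.length = Lmat N M n * Wmat N n * kron N M n 1 (DFT n) * Lmat N n M := by
  have hgd : (b ++ [n]).getD b.length 1 = n := by
    rw [List.getD_append_right b [n] 1 b.length le_rfl, Nat.sub_self]
    rfl
  have htk : (b ++ [n]).take (b.length + 1) = b ++ [n] :=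
    List.take_of_length_le (by simp)
  unfold Dfac
  rw [hgd, htk]
  have hprod : (b ++ [n]).prod = N := by
    rw [List.prod_append, List.prod_singleton, ← hMb, ← hN]
  rw [hprod]
  have hN0 : 0 < N := hN ▸ Nat.mul_pos hM0 hn
  have hNN : N / N = 1 := Nat.div_self hN0
  have hNn : N / n = M := by rw [hN, Nat.mul_div_cancel _ hn]
  rw [hNN, hNn]
  simp only [kron_one_left_full]
  rw [Lmat_inv hn hM0 (by rw [hN]; ring)]

lemma base_case {n : ℕ} (hn : 0 < n) :
    Smat n [n] * DFT n = ((List.range ([n].length)).map (Dfac n [n])).prod := by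
  rw [Smat_singleton, Matrix.one_mul]
  show _ = ((List.range 1).map (Dfac n [n])).prod
  rw [show List.range 1 = [0] from rfl, List.map_singleton, List.prod_singleton]
  unfold Dfac
  have hgd : [n].getD 0 1 = n := rfl
  have hP : ([n].take 1).prod = n := by simp
  rw [hgd, hP, Nat.div_self hn, Lmat_self_one hn, Wmat_self_one]
  rw [kron_one_left_full, kron_one_left_full, inv_one, Matrix.one_mul,
    Matrix.one_mul, Matrix.mul_one]

lemma inv_transport {N N' : ℕ} (h : N = N') (a : List ℕ) :
    (∃ T, Smat N a * T = 1 ∧ T * Smat N a = 1) →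
    ∃ T, Smat N' a * T = 1 ∧ T * Smat N' a = 1 := by subst h; exact id

lemma Smat_inv_ex : ∀ (a : List ℕ), (∀ x ∈ a, 0 < x) → a ≠ [] →
    ∃ T, Smat a.prod a * T = 1 ∧ T * Smat a.prod a = 1 := by
  intro a
  induction a using List.reverseRecOn with
  | nil => intro _ h; exact absurd rfl h
  | append_singleton b n ih =>
    intro ha _
    have hn : 0 < n := ha n (by simp)
    have hb : ∀ x ∈ b, 0 < x := fun x hx => ha x (List.mem_append_left _ hx)
    rcases eq_or_ne b [] with hb0 | hb0
    · subst hb0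
      rw [show ([] ++ [n] : List ℕ) = [n] from rfl]
      rw [show ([n] : List ℕ).prod = n from by simp]
      exact ⟨1, by rw [Smat_singleton, Matrix.one_mul], by rw [Smat_singleton, Matrix.mul_one]⟩
    · obtain ⟨T, hT1, hT2⟩ := ih hb hb0
      have hM0 : 0 < b.prod := List.prod_pos hb
      have hprod : (b ++ [n]).prod = b.prod * n := by
        rw [List.prod_append, List.prod_singleton]
      apply inv_transport hprod.symm
      rw [Smat_append b hb hn rfl rfl]
      refine ⟨Lmat (b.prod*n) n b.prod * kron (b.prod*n) n b.prod 1 T, ?_, ?_⟩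
      · rw [Matrix.mul_assoc, ← Matrix.mul_assoc (Lmat (b.prod*n) b.prod n),
          Lmat_mul_Lmat hM0 hn rfl, Matrix.one_mul, kron_mul hM0 (mul_comm b.prod n),
          Matrix.one_mul, hT1, kron_one hM0 (mul_comm b.prod n)]
      · rw [Matrix.mul_assoc, ← Matrix.mul_assoc (kron (b.prod*n) n b.prod 1 T),
          kron_mul hM0 (mul_comm b.prod n), Matrix.one_mul, hT2, kron_one hM0 (mul_comm b.prod n),
          Matrix.one_mul, Lmat_mul_Lmat hn hM0 (mul_comm b.prod n)]

lemma main_aux : ∀ (a : List ℕ), (∀ x ∈ a, 0 < x) → a ≠ [] →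
    Smat a.prod a * DFT a.prod = ((List.range a.length).map (Dfac a.prod a)).prod := by
  intro a
  induction a using List.reverseRecOn with
  | nil => intro _ h; exact absurd rfl h
  | append_singleton b n ih =>
    intro ha _
    have hn : 0 < n := ha n (by simp)
    have hb : ∀ x ∈ b, 0 < x := fun x hx => ha x (List.mem_append_left _ hx)
    rcases eq_or_ne b [] with hb0 | hb0
    · subst hb0
      rw [show ([] ++ [n] : List ℕ) = [n] from rfl,
        show ([n] : List ℕ).prod = n from by simp]
      exact base_case hn
    · have hM0 : 0 < b.prod := List.prod_pos hb
      have hprod : (b ++ [n]).prod = b.prod * n := by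
        rw [List.prod_append, List.prod_singleton]
      rw [hprod]
      have hlen : (b ++ [n]).length = b.length + 1 := by simp
      rw [hlen, List.range_succ, List.map_append, List.prod_append, List.map_singleton,
        List.prod_singleton]
      rw [Smat_append b hb hn rfl rfl, Matrix.mul_assoc, core hM0 hn rfl,
        Dfac_last hn hM0 rfl rfl]
      rw [List.map_congr_left
        (fun k hk => Dfac_lift b hb hn rfl rfl (List.mem_range.1 hk))]
      rw [show (fun k => kron (b.prod*n) n b.prod 1 (Dfac b.prod b k))
          = (kron (b.prod*n) n b.prod 1) ∘ (Dfac b.prod b) from rfl,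
        ← List.map_map, kron_list_prod hM0 (mul_comm b.prod n), ← ih hb hb0]
      rw [← Matrix.mul_assoc, kron_mul hM0 (mul_comm b.prod n), Matrix.one_mul]
      simp only [Matrix.mul_assoc]


/-- transposed (DIF, multiply-after-butterfly) factorization.
For `α = (n_K,…,n_0)` (least-significant-first list `a = [n_0,…,n_K]`),
`F_N = S_α⁻¹ (∏_{k=0}^K D̂_{k,α})` with `D̂_{0,α}` leftmost, where
`D̂_{k,α} = A_k⁻¹ Ŵ_k (I_{N/n_k} ⊗ F_{n_k}) A_k`,
`A_k = I_{N/N_k} ⊗ L^{N_k}_{n_k}`, `Ŵ_k = I_{N/N_k} ⊗ W^{N_k}_{n_k}`,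
`N_k = ∏_{j=0}^k n_j`. -/
theorem fft_dit_transposed (a : List ℕ) (hne : a ≠ []) (ha : ∀ x ∈ a, 0 < x)
    (N : ℕ) (hN : N = a.prod) :
    DFT N =
      (Smat N a)⁻¹ *
      (((List.range a.length).map (fun k =>
        let nk := a.getD k 1
        let Nk := (a.take (k + 1)).prod
        let A := kron N (N / Nk) Nk 1 (Lmat Nk nk (Nk / nk))
        let W := kron N (N / Nk) Nk 1 (Wmat Nk nk)
        A⁻¹ * W * kron N (N / nk) nk 1 (DFT nk) * A)).prod) := by
  subst hN
  obtain ⟨T, hT1, hT2⟩ := Smat_inv_ex a ha hne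
  have hinv : (Smat a.prod a)⁻¹ = T := Matrix.inv_eq_right_inv hT1
  have hmap : ((List.range a.length).map (fun k =>
        let nk := a.getD k 1
        let Nk := (a.take (k + 1)).prod
        let A := kron a.prod (a.prod / Nk) Nk 1 (Lmat Nk nk (Nk / nk))
        let W := kron a.prod (a.prod / Nk) Nk 1 (Wmat Nk nk)
        A⁻¹ * W * kron a.prod (a.prod / nk) nk 1 (DFT nk) * A)).prod
      = ((List.range a.length).map (Dfac a.prod a)).prod := rfl
  rw [hmap, hinv, ← main_aux a ha hne, ← Matrix.mul_assoc, hT2, Matrix.one_mul]
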